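/- Fix constants T ≥ 1, τ > 0, μ > 0, and ε ∈ (0, 1/2), and let M = ⌈T·log₂ N⌉ and d = 2·Q⁻¹(ε)/μ with 2τ/d = Θ(1). Then there exist C > 0 and N₀ such that for all N ≥ N₀: any N points in the ball of radius τ in ℝ^M that are pairwise at Euclidean distance at least d have total l₀ cost (sum of support sizes) at least C·N·log₂ N. -/

import Mathlib

open MeasureTheory Metric Finset Real Set
open scoped ENNReal

noncomputable def gaussQ (a : ℝ) : ℝ :=
  ∫ b in Set.Ioi a, Real.exp (-b ^ 2 / 2) / Real.sqrt (2 * Real.pi)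

lemma gaussQ_zero : gaussQ 0 = 1 / 2 := by
  unfold gaussQ
  rw [MeasureTheory.integral_div]
  have h : ∀ b : ℝ, Real.exp (-b ^ 2 / 2) = Real.exp (-(1/2) * b ^ 2) := by
    intro b; ring_nf
  simp_rw [h]
  rw [integral_gaussian_Ioi]
  have h2 : Real.pi / (1/2) = 2 * Real.pi := by ring
  rw [h2]
  have h3 : Real.sqrt (2 * Real.pi) ≠ 0 := by
    positivity
  field_simp

lemma gaussQ_integrable : MeasureTheory.Integrable
    (fun b : ℝ => Real.exp (-b ^ 2 / 2) / Real.sqrt (2 * Real.pi)) := by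
  have h : ∀ b : ℝ, Real.exp (-b ^ 2 / 2) = Real.exp (-(1/2) * b ^ 2) := by
    intro b; ring_nf
  simp_rw [h]
  exact (integrable_exp_neg_mul_sq (by norm_num : (0:ℝ) < 1/2)).div_const _

lemma gaussQ_anti {a b : ℝ} (hab : a ≤ b) : gaussQ b ≤ gaussQ a := by
  unfold gaussQ
  refine MeasureTheory.setIntegral_mono_set (gaussQ_integrable.integrableOn) ?_ ?_
  · filter_upwards with x
    positivity
  · exact Filter.Eventually.of_forall fun x hx => lt_of_le_of_lt hab hx

lemma packing_card_le {ι : Type*} [Fintype ι] {τ d : ℝ} (hτ : 0 ≤ τ) (hd : 0 < d)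
    (Q : Finset (EuclideanSpace ℝ ι)) (hQτ : ∀ x ∈ Q, ‖x‖ ≤ τ)
    (hsep : ∀ x ∈ Q, ∀ y ∈ Q, x ≠ y → d ≤ dist x y) :
    (Q.card : ℝ) ≤ ((2 * τ + d) / d) ^ (Fintype.card ι) := by
  classical
  set n := Fintype.card ι with hn
  have hfr : Module.finrank ℝ (EuclideanSpace ℝ ι) = n := finrank_euclideanSpace
  have hd2 : (0:ℝ) < d / 2 := by linarith
  -- disjointness
  have hdisj : (Q : Set (EuclideanSpace ℝ ι)).PairwiseDisjoint
      (fun x => Metric.ball x (d/2)) := by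
    intro x hx y hy hxy
    exact Metric.ball_disjoint_ball (by linarith [hsep x hx y hy hxy])
  have hsum : ∑ x ∈ Q, volume (Metric.ball x (d/2))
      = volume (⋃ x ∈ Q, Metric.ball x (d/2)) :=
    (measure_biUnion_finset hdisj fun _ _ => measurableSet_ball).symm
  have hsub : (⋃ x ∈ Q, Metric.ball x (d/2)) ⊆ Metric.ball 0 (τ + d/2) := by
    intro z hz
    simp only [Set.mem_iUnion] at hz
    obtain ⟨x, hx, hzx⟩ := hz
    rw [Metric.mem_ball] at hzx ⊢
    have := hQτ x hx
    calc dist z 0 ≤ dist z x + dist x 0 := dist_triangle _ _ _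
      _ < d/2 + τ := by rw [dist_zero_right] at *; linarith
      _ = τ + d/2 := by ring
  have hball : ∀ x : EuclideanSpace ℝ ι, volume (Metric.ball x (d/2))
      = ENNReal.ofReal ((d/2) ^ n) * volume (Metric.ball (0 : EuclideanSpace ℝ ι) 1) := by
    intro x
    rw [Measure.addHaar_ball_of_pos volume x hd2, hfr]
  have hball2 : volume (Metric.ball (0 : EuclideanSpace ℝ ι) (τ + d/2))
      = ENNReal.ofReal ((τ + d/2) ^ n) * volume (Metric.ball (0 : EuclideanSpace ℝ ι) 1) := by
    rw [Measure.addHaar_ball_of_pos volume _ (by linarith), hfr]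
  have key : (Q.card : ℝ≥0∞) * (ENNReal.ofReal ((d/2) ^ n)
        * volume (Metric.ball (0 : EuclideanSpace ℝ ι) 1))
      ≤ ENNReal.ofReal ((τ + d/2) ^ n) * volume (Metric.ball (0 : EuclideanSpace ℝ ι) 1) := by
    rw [← hball2]
    calc (Q.card : ℝ≥0∞) * (ENNReal.ofReal ((d/2) ^ n)
          * volume (Metric.ball (0 : EuclideanSpace ℝ ι) 1))
        = ∑ x ∈ Q, volume (Metric.ball x (d/2)) := by
          rw [Finset.sum_congr rfl fun x _ => hball x, Finset.sum_const, nsmul_eq_mul]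
      _ = volume (⋃ x ∈ Q, Metric.ball x (d/2)) := hsum
      _ ≤ _ := measure_mono hsub
  have hV0 : volume (Metric.ball (0 : EuclideanSpace ℝ ι) 1) ≠ 0 :=
    (measure_ball_pos volume _ one_pos).ne'
  have hVtop : volume (Metric.ball (0 : EuclideanSpace ℝ ι) 1) ≠ ⊤ :=
    measure_ball_lt_top.ne
  rw [← mul_assoc] at key
  have key2 : (Q.card : ℝ≥0∞) * ENNReal.ofReal ((d/2) ^ n)
      ≤ ENNReal.ofReal ((τ + d/2) ^ n) :=
    (ENNReal.mul_le_mul_iff_left hV0 hVtop).mp key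
  have key3 : (Q.card : ℝ) * (d/2) ^ n ≤ (τ + d/2) ^ n := by
    have := ENNReal.toReal_mono (by finiteness) key2
    rw [ENNReal.toReal_mul, ENNReal.toReal_natCast, ENNReal.toReal_ofReal (by positivity),
      ENNReal.toReal_ofReal (by positivity)] at this
    exact this
  have hpow : (0:ℝ) < (d/2) ^ n := by positivity
  rw [show (2 * τ + d) / d = (τ + d/2) / (d/2) by field_simp, div_pow,
    le_div_iff₀ hpow]
  exact key3

lemma supp_packing {m : ℕ} (S : Finset (Fin m)) {τ d : ℝ} (hτ : 0 ≤ τ) (hd : 0 < d)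
    (Q : Finset (EuclideanSpace ℝ (Fin m))) (hQτ : ∀ x ∈ Q, ‖x‖ ≤ τ)
    (hsep : ∀ x ∈ Q, ∀ y ∈ Q, x ≠ y → d ≤ dist x y)
    (hsupp : ∀ x ∈ Q, ∀ i, i ∉ S → x i = 0) :
    (Q.card : ℝ) ≤ ((2 * τ + d) / d) ^ S.card := by
  classical
  set r : EuclideanSpace ℝ (Fin m) → EuclideanSpace ℝ {i // i ∈ S} :=
    fun x => WithLp.toLp 2 (fun j : {i // i ∈ S} => x j.1) with hr
  have hdist : ∀ x ∈ Q, ∀ y ∈ Q, dist (r x) (r y) = dist x y := by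
    intro x hx y hy
    rw [EuclideanSpace.dist_eq, EuclideanSpace.dist_eq]
    congr 1
    have h1 : ∑ j : {i // i ∈ S}, dist (x j.1) (y j.1) ^ 2
        = ∑ i ∈ S, dist (x i) (y i) ^ 2 := by
      rw [← Finset.sum_coe_sort S (fun i => dist (x i) (y i) ^ 2)]
    rw [hr]
    simp only []
    rw [h1]
    refine Finset.sum_subset S.subset_univ fun i _ hiS => ?_
    rw [hsupp x hx i hiS, hsupp y hy i hiS]
    simp
  have hnorm : ∀ x ∈ Q, ‖r x‖ = ‖x‖ := by
    intro x hx
    rw [EuclideanSpace.norm_eq, EuclideanSpace.norm_eq]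
    congr 1
    have h1 : ∑ j : {i // i ∈ S}, ‖x j.1‖ ^ 2 = ∑ i ∈ S, ‖x i‖ ^ 2 := by
      rw [← Finset.sum_coe_sort S (fun i => ‖x i‖ ^ 2)]
    rw [hr]
    simp only []
    rw [h1]
    refine Finset.sum_subset S.subset_univ fun i _ hiS => ?_
    rw [hsupp x hx i hiS]
    simp
  have hinj : Set.InjOn r Q := by
    intro x hx y hy hxy
    by_contra hne
    have h1 := hsep x hx y hy hne
    rw [← hdist x hx y hy, hxy, dist_self] at h1
    linarith
  have hcard : Q.card = (Q.image r).card := (Finset.card_image_of_injOn hinj).symm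
  have := packing_card_le (ι := {i // i ∈ S}) hτ hd (Q.image r)
    (by
      intro z hz
      obtain ⟨x, hx, rfl⟩ := Finset.mem_image.mp hz
      rw [hnorm x hx]; exact hQτ x hx)
    (by
      intro z hz w hw hzw
      obtain ⟨x, hx, rfl⟩ := Finset.mem_image.mp hz
      obtain ⟨y, hy, rfl⟩ := Finset.mem_image.mp hw
      have hxy : x ≠ y := fun h => hzw (by rw [h])
      rw [hdist x hx y hy]
      exact hsep x hx y hy hxy)
  rwa [hcard, ← Fintype.card_coe S]

lemma small_support_count {m : ℕ} (s : ℕ) {τ d : ℝ} (hτ : 0 ≤ τ) (hd : 0 < d)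
    (hκ : 1 ≤ (2 * τ + d) / d)
    (P : Finset (EuclideanSpace ℝ (Fin m))) (hPτ : ∀ x ∈ P, ‖x‖ ≤ τ)
    (hsep : ∀ x ∈ P, ∀ y ∈ P, x ≠ y → d ≤ dist x y) :
    ((P.filter (fun x => (Finset.univ.filter (fun i => x i ≠ 0)).card ≤ s)).card : ℝ)
      ≤ (∑ k ∈ Finset.range (s + 1), (m.choose k : ℝ)) * ((2 * τ + d) / d) ^ s := by
  classical
  set supp : EuclideanSpace ℝ (Fin m) → Finset (Fin m) :=
    fun x => Finset.univ.filter (fun i => x i ≠ 0) with hsuppdef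
  set 𝒮 : Finset (Finset (Fin m)) :=
    (Finset.univ : Finset (Fin m)).powerset.filter (fun S => S.card ≤ s) with hS
  set Small := P.filter (fun x => (supp x).card ≤ s) with hSm
  have hsubset : Small ⊆ 𝒮.biUnion (fun S => P.filter (fun x => supp x = S)) := by
    intro x hx
    rw [hSm, Finset.mem_filter] at hx
    rw [Finset.mem_biUnion]
    exact ⟨supp x, by
      rw [hS, Finset.mem_filter, Finset.mem_powerset]
      exact ⟨Finset.filter_subset _ _ |>.trans (by simp), hx.2⟩,
      Finset.mem_filter.mpr ⟨hx.1, rfl⟩⟩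
  have h1 : Small.card ≤ ∑ S ∈ 𝒮, (P.filter (fun x => supp x = S)).card :=
    (Finset.card_le_card hsubset).trans (Finset.card_biUnion_le)
  have h2 : ∀ S ∈ 𝒮, ((P.filter (fun x => supp x = S)).card : ℝ)
      ≤ ((2 * τ + d) / d) ^ s := by
    intro S hSmem
    rw [hS, Finset.mem_filter] at hSmem
    have hp := supp_packing S hτ hd (P.filter (fun x => supp x = S))
      (fun x hx => hPτ x (Finset.mem_filter.mp hx).1)
      (fun x hx y hy hxy => hsep x (Finset.mem_filter.mp hx).1 y (Finset.mem_filter.mp hy).1 hxy)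
      (by
        intro x hx i hiS
        have := (Finset.mem_filter.mp hx).2
        by_contra hxi
        exact hiS (this ▸ (Finset.mem_filter.mpr ⟨Finset.mem_univ i, hxi⟩)))
    exact hp.trans (pow_le_pow_right₀ hκ hSmem.2)
  have h3 : (𝒮.card : ℝ) ≤ ∑ k ∈ Finset.range (s + 1), (m.choose k : ℝ) := by
    have hsub2 : 𝒮 ⊆ (Finset.range (s + 1)).biUnion
        (fun k => Finset.powersetCard k (Finset.univ : Finset (Fin m))) := by
      intro S hSmem
      rw [hS, Finset.mem_filter, Finset.mem_powerset] at hSmem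
      rw [Finset.mem_biUnion]
      exact ⟨S.card, Finset.mem_range.mpr (Nat.lt_succ_of_le hSmem.2),
        Finset.mem_powersetCard.mpr ⟨hSmem.1, rfl⟩⟩
    have := (Finset.card_le_card hsub2).trans Finset.card_biUnion_le
    calc (𝒮.card : ℝ) ≤ (∑ k ∈ Finset.range (s + 1),
          (Finset.powersetCard k (Finset.univ : Finset (Fin m))).card : ℕ) := by
          exact_mod_cast this
      _ = ∑ k ∈ Finset.range (s + 1), (m.choose k : ℝ) := by
          push_cast
          refine Finset.sum_congr rfl fun k _ => ?_
          rw [Finset.card_powersetCard, Finset.card_univ, Fintype.card_fin]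
  calc (Small.card : ℝ)
      ≤ ∑ S ∈ 𝒮, ((P.filter (fun x => supp x = S)).card : ℝ) := by exact_mod_cast h1
    _ ≤ ∑ S ∈ 𝒮, ((2 * τ + d) / d) ^ s := Finset.sum_le_sum h2
    _ = (𝒮.card : ℝ) * ((2 * τ + d) / d) ^ s := by rw [Finset.sum_const, nsmul_eq_mul]
    _ ≤ _ := by
        apply mul_le_mul_of_nonneg_right h3 (by positivity)

lemma pow_le_exp_mul_factorial (s : ℕ) : (s : ℝ) ^ s ≤ Real.exp s * s.factorial := by
  have h := Real.sum_le_exp_of_nonneg (x := (s : ℝ)) (by positivity) (s + 1)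
  have h2 : (s : ℝ) ^ s / s.factorial ≤ Real.exp s := by
    refine le_trans ?_ h
    refine Finset.single_le_sum (f := fun i => (s : ℝ) ^ i / i.factorial) ?_ ?_
    · intro i _; positivity
    · exact Finset.self_mem_range_succ s
  rw [div_le_iff₀ (by positivity)] at h2
  linarith [h2]

lemma pow_div_factorial_mono (M : ℝ) {k s : ℕ} (hk : k ≤ s) (hs : (s : ℝ) ≤ M) :
    M ^ k / k.factorial ≤ M ^ s / s.factorial := by
  induction s, hk using Nat.le_induction with
  | base => exact le_refl _
  | succ t ht ih =>
    have hM0 : (0:ℝ) < M := lt_of_lt_of_le (by positivity) hs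
    have hts : (t : ℝ) ≤ M := by
      refine le_trans ?_ hs; push_cast; linarith
    refine (ih hts).trans ?_
    rw [div_le_div_iff₀ (by positivity) (by positivity)]
    rw [Nat.factorial_succ, pow_succ]
    push_cast
    have h1 : (t : ℝ) + 1 ≤ M := by
      have := hs; push_cast at this; linarith
    have hf : (0:ℝ) < (t.factorial : ℝ) := by exact_mod_cast t.factorial_pos
    nlinarith [pow_pos hM0 t, hf, mul_pos (pow_pos hM0 t) hf]

lemma choose_le_pow_div (m k : ℕ) : (m.choose k : ℝ) ≤ (m : ℝ) ^ k / k.factorial := by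
  rw [le_div_iff₀ (by positivity : (0:ℝ) < (k.factorial : ℝ))]
  have h : m.choose k * k.factorial ≤ m ^ k := by
    calc m.choose k * k.factorial = m.descFactorial k := by
          rw [Nat.descFactorial_eq_factorial_mul_choose]; ring
      _ ≤ m ^ k := Nat.descFactorial_le_pow m k
  exact_mod_cast h

lemma count_arith {N m s : ℕ} {T κ A c Lr : ℝ}
    (hT : 1 ≤ T) (hκ1 : 1 ≤ κ) (hA : A = 6 * T * κ) (hA12 : 12 ≤ A)
    (hc : c = 1 / A ^ 3)
    (hβ : c * Real.logb 2 (2 * A ^ 4) ≤ 1 / 4)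
    (hN1 : 1 ≤ (N:ℝ)) (hNA : (4 * A ^ 4) ^ 2 ≤ (N:ℝ))
    (hLr : Lr = Real.logb 2 (N:ℝ)) (hL1 : 1 ≤ Lr)
    (hm2 : (m:ℝ) ≤ 2 * T * Lr) (hs1 : 1 ≤ s) (hsm : s ≤ m)
    (hscl : c * Lr ≤ (s:ℝ)) (hsu : (s:ℝ) ≤ c * Lr + 1) :
    (∑ k ∈ Finset.range (s + 1), (m.choose k : ℝ)) * κ ^ s ≤ (N:ℝ) / 2 := by
  have hA0 : 0 < A := by linarith
  have hc0 : 0 < c := by rw [hc]; positivity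
  have hAc : A / c = A ^ 4 := by rw [hc]; field_simp
  have hN0 : (0:ℝ) < (N:ℝ) := by linarith
  have hL0 : (0:ℝ) < Lr := by linarith
  have hs0 : (0:ℝ) < (s:ℝ) := by exact_mod_cast hs1
  have hsM : (s:ℝ) ≤ (m:ℝ) := by exact_mod_cast hsm
  have hm0 : (0:ℝ) < (m:ℝ) := by
    have : 1 ≤ m := le_trans hs1 hsm
    exact_mod_cast this
  have hfact : (0:ℝ) < (s.factorial : ℝ) := by exact_mod_cast s.factorial_pos
  have h2 : ∑ k ∈ Finset.range (s + 1), (m.choose k : ℝ)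
      ≤ ((s:ℝ) + 1) * ((m:ℝ) ^ s / s.factorial) := by
    calc ∑ k ∈ Finset.range (s + 1), (m.choose k : ℝ)
        ≤ ∑ k ∈ Finset.range (s + 1), (m:ℝ) ^ s / s.factorial := by
          refine Finset.sum_le_sum fun k hk => ?_
          refine (choose_le_pow_div m k).trans ?_
          exact pow_div_factorial_mono (m:ℝ)
            (Nat.lt_succ_iff.mp (Finset.mem_range.mp hk)) hsM
      _ = ((s:ℝ) + 1) * ((m:ℝ) ^ s / s.factorial) := by
          rw [Finset.sum_const, Finset.card_range, nsmul_eq_mul]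
          push_cast; ring
  have h3 : (m:ℝ) ^ s / s.factorial ≤ (3 * (m:ℝ) / s) ^ s := by
    have hss : (s:ℝ) ^ s ≤ 3 ^ s * s.factorial := by
      refine (pow_le_exp_mul_factorial s).trans ?_
      have hexp : Real.exp (s:ℝ) ≤ 3 ^ s := by
        have h1 : Real.exp (s:ℝ) = Real.exp 1 ^ s := by
          rw [← Real.exp_nat_mul]; norm_num
        rw [h1]
        exact pow_le_pow_left₀ (le_of_lt (Real.exp_pos 1))
          (le_of_lt (lt_of_lt_of_le Real.exp_one_lt_d9 (by norm_num))) s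
      exact mul_le_mul_of_nonneg_right hexp (le_of_lt hfact)
    have heq : (3 * (m:ℝ) / s) ^ s = 3 ^ s * (m:ℝ) ^ s / (s:ℝ) ^ s := by
      rw [div_pow, mul_pow]
    rw [heq, div_le_div_iff₀ hfact (by positivity)]
    calc (m:ℝ) ^ s * (s:ℝ) ^ s ≤ (m:ℝ) ^ s * (3 ^ s * s.factorial) :=
          mul_le_mul_of_nonneg_left hss (by positivity)
      _ = 3 ^ s * (m:ℝ) ^ s * s.factorial := by ring
  have h4 : 3 * (m:ℝ) / s * κ ≤ A ^ 4 := by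
    have hnum : 3 * (m:ℝ) * κ ≤ 6 * T * Lr * κ := by nlinarith
    have h5 : 3 * (m:ℝ) / s * κ = 3 * (m:ℝ) * κ / s := by ring
    rw [h5]
    have h6 : 3 * (m:ℝ) * κ / s ≤ 6 * T * Lr * κ / (c * Lr) := by
      apply div_le_div₀ (by positivity) hnum (by positivity) hscl
    refine h6.trans ?_
    have h7 : 6 * T * Lr * κ / (c * Lr) = A / c := by
      rw [hA]; field_simp
    rw [h7, hAc]
  have h8 : ((s:ℝ) + 1) ≤ 2 ^ s := by
    have h9 : (s + 1 : ℕ) ≤ 2 ^ s := Nat.lt_two_pow_self (n := s)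
    exact_mod_cast h9
  have h10 : (∑ k ∈ Finset.range (s + 1), (m.choose k : ℝ)) * κ ^ s
      ≤ (2 * A ^ 4) ^ s := by
    calc (∑ k ∈ Finset.range (s + 1), (m.choose k : ℝ)) * κ ^ s
        ≤ ((s:ℝ) + 1) * ((m:ℝ) ^ s / s.factorial) * κ ^ s := by
          apply mul_le_mul_of_nonneg_right h2 (by positivity)
      _ ≤ ((s:ℝ) + 1) * (3 * (m:ℝ) / s) ^ s * κ ^ s := by
          have := mul_le_mul_of_nonneg_left h3 (by positivity : (0:ℝ) ≤ (s:ℝ) + 1)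
          apply mul_le_mul_of_nonneg_right this (by positivity)
      _ = ((s:ℝ) + 1) * (3 * (m:ℝ) / s * κ) ^ s := by rw [mul_pow]; ring
      _ ≤ 2 ^ s * (A ^ 4) ^ s := by
          apply mul_le_mul h8 (pow_le_pow_left₀ (by positivity) h4 s)
            (by positivity) (by positivity)
      _ = (2 * A ^ 4) ^ s := by rw [mul_pow]
  have hbase1 : (1:ℝ) ≤ 2 * A ^ 4 := by
    have hA4 : (1:ℝ) ≤ A ^ 4 := one_le_pow₀ (by linarith)
    linarith
  have hbase0 : (0:ℝ) < 2 * A ^ 4 := by linarith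
  have h11 : ((2 * A ^ 4) ^ s : ℝ) ≤ (2 * A ^ 4) * (N:ℝ) ^ ((1:ℝ)/4) := by
    have e1 : ((2 * A ^ 4) ^ s : ℝ) = (2 * A ^ 4) ^ ((s:ℝ) : ℝ) := by
      rw [Real.rpow_natCast]
    rw [e1]
    calc (2 * A ^ 4) ^ ((s:ℝ) : ℝ)
        ≤ (2 * A ^ 4) ^ (c * Lr + 1) :=
          Real.rpow_le_rpow_of_exponent_le hbase1 hsu
      _ = (2 * A ^ 4) ^ (c * Lr) * (2 * A ^ 4) := by
          rw [Real.rpow_add hbase0, Real.rpow_one]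
      _ ≤ (N:ℝ) ^ ((1:ℝ)/4) * (2 * A ^ 4) := by
          apply mul_le_mul_of_nonneg_right _ (le_of_lt hbase0)
          have e2 : (2 * A ^ 4) ^ (c * Lr)
              = (N:ℝ) ^ (c * Real.logb 2 (2 * A ^ 4)) := by
            nth_rewrite 1 [show (2 * A ^ 4 : ℝ)
              = (2:ℝ) ^ (Real.logb 2 (2 * A ^ 4)) from
              (Real.rpow_logb (by norm_num) (by norm_num) hbase0).symm]
            rw [← Real.rpow_mul (by norm_num : (0:ℝ) ≤ 2)]
            rw [show Real.logb 2 (2 * A ^ 4) * (c * Lr)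
              = Lr * (c * Real.logb 2 (2 * A ^ 4)) by ring]
            rw [Real.rpow_mul (by norm_num : (0:ℝ) ≤ 2), hLr,
              Real.rpow_logb (by norm_num) (by norm_num) hN0]
          rw [e2]
          exact Real.rpow_le_rpow_of_exponent_le hN1 hβ
      _ = (2 * A ^ 4) * (N:ℝ) ^ ((1:ℝ)/4) := by ring
  have h12 : (2 * A ^ 4) * (N:ℝ) ^ ((1:ℝ)/4) ≤ (N:ℝ) / 2 := by
    have h14 : (N:ℝ) ^ ((1:ℝ)/2) ≤ (N:ℝ) ^ ((3:ℝ)/4) :=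
      Real.rpow_le_rpow_of_exponent_le hN1 (by norm_num)
    have h15 : 4 * A ^ 4 ≤ (N:ℝ) ^ ((1:ℝ)/2) := by
      rw [← Real.sqrt_eq_rpow]
      calc 4 * A ^ 4 = Real.sqrt ((4 * A ^ 4) ^ 2) := by
            rw [Real.sqrt_sq (by positivity)]
        _ ≤ Real.sqrt (N:ℝ) := Real.sqrt_le_sqrt hNA
    have h16 : (N:ℝ) ^ ((3:ℝ)/4) * (N:ℝ) ^ ((1:ℝ)/4) = (N:ℝ) := by
      rw [← Real.rpow_add hN0]; norm_num
    have h17 : (0:ℝ) ≤ (N:ℝ) ^ ((1:ℝ)/4) := by positivity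
    nlinarith
  linarith

theorem real_valued_l0_lower_bound (T τ μ ε d : ℝ)
    (hT : 1 ≤ T) (hτ : 0 < τ) (hμ : 0 < μ) (hε : 0 < ε) (hε2 : ε < 1 / 2)
    (qε : ℝ) (hq : gaussQ qε = ε) (hd : d = 2 * qε / μ) (hdτ : d ≤ 2 * τ) :
    ∃ C : ℝ, 0 < C ∧ ∃ N₀ : ℕ, ∀ N : ℕ, N₀ ≤ N →
      ∀ P : Finset (EuclideanSpace ℝ (Fin ⌈T * Real.logb 2 N⌉₊)),
        P.card = N →
        (∀ x ∈ P, ‖x‖ ≤ τ) →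
        (∀ x ∈ P, ∀ y ∈ P, x ≠ y → d ≤ dist x y) →
        C * N * Real.logb 2 N ≤
          ∑ x ∈ P, ((Finset.univ.filter (fun i => x i ≠ 0)).card : ℝ) := by
  classical
  have hq0 : (0:ℝ) < qε := by
    by_contra h
    push_neg at h
    have h2 := gaussQ_anti h
    rw [gaussQ_zero, hq] at h2
    linarith
  have hd0 : 0 < d := by rw [hd]; positivity
  obtain ⟨κ, hκdef⟩ : ∃ κ : ℝ, κ = (2 * τ + d) / d := ⟨_, rfl⟩
  have hκ2 : 2 ≤ κ := by rw [hκdef, le_div_iff₀ hd0]; linarith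
  have hκ1 : 1 ≤ κ := by linarith
  obtain ⟨A, hAdef⟩ : ∃ A : ℝ, A = 6 * T * κ := ⟨_, rfl⟩
  have hA12 : 12 ≤ A := by rw [hAdef]; nlinarith
  have hA0 : 0 < A := by linarith
  obtain ⟨c, hcdef⟩ : ∃ c : ℝ, c = 1 / A ^ 3 := ⟨_, rfl⟩
  have hc0 : 0 < c := by rw [hcdef]; positivity
  have hc1 : c ≤ 1 := by
    rw [hcdef, div_le_one (by positivity)]
    exact one_le_pow₀ (by linarith)
  have hβ : c * Real.logb 2 (2 * A ^ 4) ≤ 1 / 4 := by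
    have hlog2 : (1:ℝ)/2 ≤ Real.log 2 := by
      have := Real.log_two_gt_d9; linarith
    have hlogA : Real.log A ≤ A := by
      have := Real.log_le_sub_one_of_pos hA0; linarith
    have h2A : Real.logb 2 (2 * A ^ 4) ≤ 9 * A := by
      rw [Real.logb, Real.log_mul (by norm_num) (by positivity), Real.log_pow]
      rw [div_le_iff₀ (by positivity : (0:ℝ) < Real.log 2)]
      have hl2 : Real.log 2 ≤ 1 := by
        have := Real.log_le_sub_one_of_pos (by norm_num : (0:ℝ) < 2); linarith
      have hlogA0 : 0 ≤ Real.log A := Real.log_nonneg (by linarith)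
      have hmul : A * (1/2) ≤ A * Real.log 2 :=
        mul_le_mul_of_nonneg_left hlog2 (le_of_lt hA0)
      push_cast
      nlinarith [hmul]
    have hc9 : c * (9 * A) ≤ 1 / 4 := by
      rw [hcdef, div_mul_eq_mul_div, div_le_div_iff₀ (by positivity) (by norm_num)]
      nlinarith [mul_nonneg (mul_nonneg (le_of_lt hA0)
        (by linarith : (0:ℝ) ≤ A - 12)) (by linarith : (0:ℝ) ≤ A + 12)]
    have hlogpos : 0 ≤ Real.logb 2 (2 * A ^ 4) := by
      apply Real.logb_nonneg (by norm_num)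
      have hA4 : (1:ℝ) ≤ A ^ 4 := one_le_pow₀ (by linarith)
      linarith
    calc c * Real.logb 2 (2 * A ^ 4) ≤ c * (9 * A) :=
          mul_le_mul_of_nonneg_left h2A (le_of_lt hc0)
      _ ≤ 1 / 4 := hc9
  refine ⟨c / 2, by positivity, max 4 ⌈(4 * A ^ 4) ^ 2⌉₊, ?_⟩
  intro N hN P hPcard hPτ hPsep
  have hN4 : (4:ℝ) ≤ (N:ℝ) := by
    have : 4 ≤ N := le_trans (le_max_left _ _) hN
    exact_mod_cast this
  have hNA : (4 * A ^ 4) ^ 2 ≤ (N:ℝ) := by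
    have h1 : ⌈(4 * A ^ 4) ^ 2⌉₊ ≤ N := le_trans (le_max_right _ _) hN
    calc (4 * A ^ 4) ^ 2 ≤ (⌈(4 * A ^ 4) ^ 2⌉₊ : ℝ) := Nat.le_ceil _
      _ ≤ (N:ℝ) := by exact_mod_cast h1
  have hN0 : (0:ℝ) < (N:ℝ) := by linarith
  have hN1 : (1:ℝ) ≤ (N:ℝ) := by linarith
  have hL2 : 2 ≤ Real.logb 2 (N:ℝ) := by
    calc (2:ℝ) = Real.logb 2 4 := by
          rw [show (4:ℝ) = 2 ^ (2:ℕ) by norm_num, Real.logb_pow,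
            Real.logb_self_eq_one] <;> norm_num
      _ ≤ Real.logb 2 (N:ℝ) := Real.logb_le_logb_of_le (by norm_num) (by norm_num) hN4
  have hL1 : 1 ≤ Real.logb 2 (N:ℝ) := by linarith
  have hL0 : 0 < Real.logb 2 (N:ℝ) := by linarith
  have hTL1 : 1 ≤ T * Real.logb 2 (N:ℝ) := by nlinarith
  have hTL0 : (0:ℝ) ≤ T * Real.logb 2 (N:ℝ) := by linarith
  have hm2 : ((⌈T * Real.logb 2 (N:ℝ)⌉₊ : ℕ) : ℝ) ≤ 2 * T * Real.logb 2 (N:ℝ) := by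
    have h := Nat.ceil_lt_add_one hTL0
    linarith
  have hcL0 : (0:ℝ) < c * Real.logb 2 (N:ℝ) := by positivity
  have hs1 : 1 ≤ ⌈c * Real.logb 2 (N:ℝ)⌉₊ := Nat.one_le_ceil_iff.mpr hcL0
  have hsm : ⌈c * Real.logb 2 (N:ℝ)⌉₊ ≤ ⌈T * Real.logb 2 (N:ℝ)⌉₊ := by
    apply Nat.ceil_le_ceil
    have hcT : c ≤ T := hc1.trans hT
    nlinarith
  have hscl : c * Real.logb 2 (N:ℝ) ≤ (⌈c * Real.logb 2 (N:ℝ)⌉₊ : ℝ) := Nat.le_ceil _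
  have hsu : ((⌈c * Real.logb 2 (N:ℝ)⌉₊ : ℕ) : ℝ) ≤ c * Real.logb 2 (N:ℝ) + 1 :=
    le_of_lt (Nat.ceil_lt_add_one (le_of_lt hcL0))
  have hsmall : ((P.filter (fun x => (Finset.univ.filter (fun i => x i ≠ 0)).card
        ≤ ⌈c * Real.logb 2 (N:ℝ)⌉₊)).card : ℝ) ≤ (N:ℝ) / 2 := by
    have h1 := small_support_count ⌈c * Real.logb 2 (N:ℝ)⌉₊ (le_of_lt hτ) hd0
      (by rw [← hκdef]; exact hκ1) P hPτ hPsep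
    rw [← hκdef] at h1
    refine h1.trans ?_
    exact count_arith hT hκ1 hAdef hA12 hcdef hβ hN1 hNA rfl hL1 hm2 hs1 hsm hscl hsu
  set s := ⌈c * Real.logb 2 (N:ℝ)⌉₊ with hsdef
  have hsplit : (P.filter (fun x => (Finset.univ.filter (fun i => x i ≠ 0)).card ≤ s)).card
      + (P.filter (fun x => ¬ ((Finset.univ.filter (fun i => x i ≠ 0)).card ≤ s))).card
      = N := by
    rw [Finset.card_filter_add_card_filter_not, hPcard]
  have hBig : (N:ℝ) / 2
      ≤ ((P.filter (fun x => ¬ ((Finset.univ.filter (fun i => x i ≠ 0)).card ≤ s))).card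
        : ℝ) := by
    have h := hsplit
    have h2 : ((P.filter (fun x => (Finset.univ.filter (fun i => x i ≠ 0)).card ≤ s)).card
        : ℝ) + ((P.filter (fun x =>
          ¬ ((Finset.univ.filter (fun i => x i ≠ 0)).card ≤ s))).card : ℝ) = (N:ℝ) := by
      exact_mod_cast h
    linarith
  have hsum : ((P.filter (fun x =>
        ¬ ((Finset.univ.filter (fun i => x i ≠ 0)).card ≤ s))).card : ℝ)
        * (c * Real.logb 2 (N:ℝ))
      ≤ ∑ x ∈ P, ((Finset.univ.filter (fun i => x i ≠ 0)).card : ℝ) := by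
    calc ((P.filter (fun x =>
          ¬ ((Finset.univ.filter (fun i => x i ≠ 0)).card ≤ s))).card : ℝ)
          * (c * Real.logb 2 (N:ℝ))
        = ∑ _x ∈ P.filter (fun x =>
            ¬ ((Finset.univ.filter (fun i => x i ≠ 0)).card ≤ s)),
            (c * Real.logb 2 (N:ℝ)) := by rw [Finset.sum_const, nsmul_eq_mul]
      _ ≤ ∑ x ∈ P.filter (fun x =>
            ¬ ((Finset.univ.filter (fun i => x i ≠ 0)).card ≤ s)),
            ((Finset.univ.filter (fun i => x i ≠ 0)).card : ℝ) := by
          refine Finset.sum_le_sum fun x hx => ?_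
          rw [Finset.mem_filter] at hx
          have h1 : s < (Finset.univ.filter (fun i => x i ≠ 0)).card :=
            Nat.lt_of_not_le hx.2
          have h2 : (s:ℝ) ≤ ((Finset.univ.filter (fun i => x i ≠ 0)).card : ℝ) := by
            exact_mod_cast le_of_lt h1
          linarith [hscl]
      _ ≤ ∑ x ∈ P, ((Finset.univ.filter (fun i => x i ≠ 0)).card : ℝ) :=
          Finset.sum_le_sum_of_subset_of_nonneg (Finset.filter_subset _ _)
            fun x _ _ => Nat.cast_nonneg _
  calc c / 2 * (N:ℝ) * Real.logb 2 (N:ℝ)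
      = ((N:ℝ) / 2) * (c * Real.logb 2 (N:ℝ)) := by ring
    _ ≤ ((P.filter (fun x =>
          ¬ ((Finset.univ.filter (fun i => x i ≠ 0)).card ≤ s))).card : ℝ)
          * (c * Real.logb 2 (N:ℝ)) :=
        mul_le_mul_of_nonneg_right hBig (by positivity)
    _ ≤ _ := hsum
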